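/- There exist universal constants 0 < c ≤ C such that the following holds. Let ε > 0 and let p, q be distributions on [2]. Let V := sup over T ∈ P^ε_{2,2} of d_h²(Tp, Tq). If ε ≤ 1, then c·ε²·d_TV(p,q)² ≤ V ≤ C·ε²·d_TV(p,q)²; if ε > 1, then c·min(e^ε·d_TV(p,q)², d_h²(p,q)) ≤ V ≤ C·min(e^ε·d_TV(p,q)², d_h²(p,q)). Moreover, the supremum is attained by the binary randomized response channel: V = d_h²(RR^{ε,2} p, RR^{ε,2} q). -/

import Mathlib

open scoped Classical ENNReal
open Finset

noncomputable section

/-- `p` is a probability distribution on `Fin k`. -/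
def IsDist {k : ℕ} (p : Fin k → ℝ) : Prop :=
  (∀ i, 0 ≤ p i) ∧ ∑ i, p i = 1

/-- `T` is a channel from `[k]` to `[ℓ]`: nonnegative entries, columns sum to 1. -/
def IsChannel {ℓ k : ℕ} (T : Matrix (Fin ℓ) (Fin k) ℝ) : Prop :=
  (∀ r c, 0 ≤ T r c) ∧ ∀ c, ∑ r, T r c = 1

/-- Squared Hellinger divergence `d_h²(p,q) = Σ_i (√p_i − √q_i)²`. -/
def hellingerSq {k : ℕ} (p q : Fin k → ℝ) : ℝ :=
  ∑ i, (Real.sqrt (p i) - Real.sqrt (q i)) ^ 2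

/-- Total variation distance `d_TV(p,q) = (1/2) Σ_i |p_i − q_i|`. -/
def tvDist {k : ℕ} (p q : Fin k → ℝ) : ℝ :=
  (1 / 2) * ∑ i, |p i - q i|

/-- `T` is an `ε`-LDP channel: `T(r,c) ≤ e^ε T(r,c')` for all rows `r`, columns `c, c'`. -/
def IsLDP {ℓ k : ℕ} (ε : ℝ) (T : Matrix (Fin ℓ) (Fin k) ℝ) : Prop :=
  IsChannel T ∧ ∀ r c c', T r c ≤ Real.exp ε * T r c'

/-- The `ℓ`-ary randomized response channel with privacy parameter `ε`. -/
def RRChannel (ε : ℝ) (ℓ : ℕ) : Matrix (Fin ℓ) (Fin ℓ) ℝ :=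
  fun j i => if j = i then Real.exp ε / ((ℓ : ℝ) - 1 + Real.exp ε)
             else 1 / ((ℓ : ℝ) - 1 + Real.exp ε)

namespace SDPIAux

open Real

lemma shift_le (u v s : ℝ) (hu : 0 ≤ u) (hv : 0 ≤ v) (hs : 0 ≤ s) :
    (sqrt (u + s) - sqrt (v + s)) ^ 2 ≤ (sqrt u - sqrt v) ^ 2 := by
  have hA := Real.sq_sqrt (by linarith : (0:ℝ) ≤ u + s)
  have hB := Real.sq_sqrt (by linarith : (0:ℝ) ≤ v + s)
  have ha := Real.sq_sqrt hu
  have hb := Real.sq_sqrt hv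
  have hAn := Real.sqrt_nonneg (u+s)
  have hBn := Real.sqrt_nonneg (v+s)
  have han := Real.sqrt_nonneg u
  have hbn := Real.sqrt_nonneg v
  set A := sqrt (u+s); set B := sqrt (v+s); set a := sqrt u; set b := sqrt v
  have key : a*b + s ≤ A*B := by
    have h1 : (a*b+s)^2 ≤ (A*B)^2 := by nlinarith [sq_nonneg (a - b)]
    nlinarith [mul_nonneg hAn hBn, mul_nonneg han hbn]
  nlinarith

lemma mix_le (l u v s : ℝ) (hl : 0 ≤ l) (hu : 0 ≤ u) (hv : 0 ≤ v) (hs : 0 ≤ s) :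
    (sqrt (l*u + s) - sqrt (l*v + s)) ^ 2 ≤ l * (sqrt u - sqrt v) ^ 2 := by
  have h1 := shift_le (l*u) (l*v) s (by positivity) (by positivity) hs
  have h2 : (sqrt (l*u) - sqrt (l*v))^2 = l * (sqrt u - sqrt v)^2 := by
    rw [Real.sqrt_mul hl u, Real.sqrt_mul hl v, ← mul_sub, mul_pow, Real.sq_sqrt hl]
  linarith

lemma lower1 (x y : ℝ) (hx : 0 ≤ x) (hy : 0 ≤ y) :
    (x - y)^2 ≤ (sqrt x - sqrt y)^2 * (2*(x+y)) := by
  have ha := Real.sq_sqrt hx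
  have hb := Real.sq_sqrt hy
  have han := Real.sqrt_nonneg x
  have hbn := Real.sqrt_nonneg y
  set a := sqrt x; set b := sqrt y
  nlinarith [sq_nonneg ((a-b)*(a-b)), sq_nonneg (a-b), sq_nonneg (a+b)]

lemma upper1 (x y : ℝ) (hx : 0 ≤ x) (hy : 0 ≤ y) :
    (sqrt x - sqrt y)^2 * (x+y) ≤ (x - y)^2 := by
  have ha := Real.sq_sqrt hx
  have hb := Real.sq_sqrt hy
  have han := Real.sqrt_nonneg x
  have hbn := Real.sqrt_nonneg y
  set a := sqrt x; set b := sqrt y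
  nlinarith [mul_nonneg han hbn, sq_nonneg (a-b), sq_nonneg (a+b)]

lemma cs_le (w z a b c d : ℝ) (hw : 0 ≤ w) (hz : 0 ≤ z) (ha : 0 ≤ a) (hb : 0 ≤ b)
    (hc : 0 ≤ c) (hd : 0 ≤ d) :
    w * (sqrt a * sqrt c) + z * (sqrt b * sqrt d) ≤ sqrt ((w*a+z*b)*(w*c+z*d)) := by
  have hL : 0 ≤ w * (sqrt a * sqrt c) + z * (sqrt b * sqrt d) := by positivity
  have hR : (0:ℝ) ≤ (w*a+z*b)*(w*c+z*d) := by positivity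
  rw [Real.le_sqrt hL hR]
  calc (w * (sqrt a * sqrt c) + z * (sqrt b * sqrt d))^2
      ≤ (w*(sqrt a)^2+z*(sqrt b)^2)*(w*(sqrt c)^2+z*(sqrt d)^2) := by
        nlinarith [mul_nonneg (mul_nonneg hw hz) (sq_nonneg (sqrt a * sqrt d - sqrt b * sqrt c))]
    _ = (w*a+z*b)*(w*c+z*d) := by
        rw [Real.sq_sqrt ha, Real.sq_sqrt hb, Real.sq_sqrt hc, Real.sq_sqrt hd]

lemma dpi (A B p0 p1 q0 q1 : ℝ) (hA : 0 ≤ A) (hB : 0 ≤ B) (hAB : A + B = 1)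
    (hp0 : 0 ≤ p0) (hp1 : 0 ≤ p1)
    (hq0 : 0 ≤ q0) (hq1 : 0 ≤ q1) :
    (sqrt (A*p0+B*p1) - sqrt (A*q0+B*q1))^2 + (sqrt (B*p0+A*p1) - sqrt (B*q0+A*q1))^2
      ≤ (sqrt p0 - sqrt q0)^2 + (sqrt p1 - sqrt q1)^2 := by
  have hx : (0:ℝ) ≤ A*p0+B*p1 := by positivity
  have hy : (0:ℝ) ≤ A*q0+B*q1 := by positivity
  have hx' : (0:ℝ) ≤ B*p0+A*p1 := by positivity
  have hy' : (0:ℝ) ≤ B*q0+A*q1 := by positivity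
  have c1 := cs_le A B p0 p1 q0 q1 hA hB hp0 hp1 hq0 hq1
  have c2 := cs_le B A p0 p1 q0 q1 hB hA hp0 hp1 hq0 hq1
  have s1 : sqrt ((A*p0+B*p1)*(A*q0+B*q1)) = sqrt (A*p0+B*p1) * sqrt (A*q0+B*q1) :=
    Real.sqrt_mul hx _
  have s2 : sqrt ((B*p0+A*p1)*(B*q0+A*q1)) = sqrt (B*p0+A*p1) * sqrt (B*q0+A*q1) :=
    Real.sqrt_mul hx' _
  rw [s1] at c1; rw [s2] at c2
  have e1 : (sqrt (A*p0+B*p1) - sqrt (A*q0+B*q1))^2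
      = (A*p0+B*p1) + (A*q0+B*q1) - 2*(sqrt (A*p0+B*p1) * sqrt (A*q0+B*q1)) := by
    rw [sub_sq, Real.sq_sqrt hx, Real.sq_sqrt hy]; ring
  have e2 : (sqrt (B*p0+A*p1) - sqrt (B*q0+A*q1))^2
      = (B*p0+A*p1) + (B*q0+A*q1) - 2*(sqrt (B*p0+A*p1) * sqrt (B*q0+A*q1)) := by
    rw [sub_sq, Real.sq_sqrt hx', Real.sq_sqrt hy']; ring
  have e3 : (sqrt p0 - sqrt q0)^2 = p0 + q0 - 2*(sqrt p0 * sqrt q0) := by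
    rw [sub_sq, Real.sq_sqrt hp0, Real.sq_sqrt hq0]; ring
  have e4 : (sqrt p1 - sqrt q1)^2 = p1 + q1 - 2*(sqrt p1 * sqrt q1) := by
    rw [sub_sq, Real.sq_sqrt hp1, Real.sq_sqrt hq1]; ring
  rw [e1, e2, e3, e4]
  nlinarith [c1, c2]

set_option maxHeartbeats 1000000 in
lemma channel_le (E a b p0 p1 q0 q1 : ℝ) (hE : 1 < E)
    (hb0 : 0 ≤ b) (hba : b ≤ a) (ha1 : a ≤ 1) (hab : a ≤ E*b) (hba' : 1-b ≤ E*(1-a))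
    (hp0 : 0 ≤ p0) (hp1 : 0 ≤ p1) (hp : p0 + p1 = 1)
    (hq0 : 0 ≤ q0) (hq1 : 0 ≤ q1) (hq : q0 + q1 = 1) :
    (sqrt (a*p0+b*p1) - sqrt (a*q0+b*q1))^2
      + (sqrt (1-(a*p0+b*p1)) - sqrt (1-(a*q0+b*q1)))^2
    ≤ (sqrt (E/(E+1)*p0 + 1/(E+1)*p1) - sqrt (E/(E+1)*q0 + 1/(E+1)*q1))^2
      + (sqrt (1-(E/(E+1)*p0 + 1/(E+1)*p1)) - sqrt (1-(E/(E+1)*q0 + 1/(E+1)*q1)))^2 := by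
  have hE0 : (0:ℝ) < E - 1 := by linarith
  have hE1 : (0:ℝ) < E + 1 := by linarith
  set A : ℝ := E/(E+1) with hAdef
  set B : ℝ := 1/(E+1) with hBdef
  have hA0 : 0 ≤ A := by rw [hAdef]; positivity
  have hB0 : 0 ≤ B := by rw [hBdef]; positivity
  have hAB : A + B = 1 := by rw [hAdef, hBdef]; field_simp
  set l : ℝ := (a-b)*(E+1)/(E-1) with hldef
  set m : ℝ := (b*E - a)/(E-1) with hmdef
  set n : ℝ := (E*(1-a) - (1-b))/(E-1) with hndef
  have hl0 : 0 ≤ l := by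
    apply div_nonneg _ (le_of_lt hE0); nlinarith
  have hm0 : 0 ≤ m := by apply div_nonneg _ (le_of_lt hE0); nlinarith
  have hn0 : 0 ≤ n := by apply div_nonneg _ (le_of_lt hE0); nlinarith
  have hlmn : l + m + n = 1 := by rw [hldef, hmdef, hndef]; field_simp; ring
  have hcoefA : l*A + m = a := by rw [hldef, hmdef, hAdef]; field_simp; ring
  have hcoefB : l*B + m = b := by rw [hldef, hmdef, hBdef]; field_simp; ring
  set xs : ℝ := A*p0+B*p1 with hxs
  set ys : ℝ := A*q0+B*q1 with hys
  have hxs0 : 0 ≤ xs := by rw [hxs]; positivity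
  have hys0 : 0 ≤ ys := by rw [hys]; positivity
  have hxs1 : xs ≤ 1 := by rw [hxs]; nlinarith
  have hys1 : ys ≤ 1 := by rw [hys]; nlinarith
  have ex : a*p0+b*p1 = l*xs + m := by
    rw [hxs, ← hcoefA, ← hcoefB]; linear_combination m * hp
  have ey : a*q0+b*q1 = l*ys + m := by
    rw [hys, ← hcoefA, ← hcoefB]; linear_combination m * hq
  have ex' : 1-(a*p0+b*p1) = l*(1-xs) + n := by rw [ex]; linarith [hlmn]
  have ey' : 1-(a*q0+b*q1) = l*(1-ys) + n := by rw [ey]; linarith [hlmn]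
  have h1 : (sqrt (a*p0+b*p1) - sqrt (a*q0+b*q1))^2 ≤ l * (sqrt xs - sqrt ys)^2 := by
    rw [ex, ey]; exact mix_le l xs ys m hl0 hxs0 hys0 hm0
  have h2 : (sqrt (1-(a*p0+b*p1)) - sqrt (1-(a*q0+b*q1)))^2
      ≤ l * (sqrt (1-xs) - sqrt (1-ys))^2 := by
    rw [ex', ey']; exact mix_le l (1-xs) (1-ys) n hl0 (by linarith) (by linarith) hn0
  have hl1 : l ≤ 1 := by linarith
  have hrest : 0 ≤ (1-l) * ((sqrt xs - sqrt ys)^2 + (sqrt (1-xs) - sqrt (1-ys))^2) :=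
    mul_nonneg (by linarith) (by positivity)
  nlinarith [h1, h2, hrest]


lemma sq_eq_of_mul (d t E : ℝ) (h : d*(E+1) = (E-1)*t) :
    d^2*(E+1)^2 = (E-1)^2*t^2 := by
  linear_combination (d*(E+1) + (E-1)*t) * h

lemma case1_lower (ε E t H d u : ℝ) (hε : 0 < ε) (hεe : ε ≤ 1)
    (hEl : ε + 1 ≤ E) (hEu : E ≤ 2.7182818286)
    (hu0 : 0 ≤ u) (hu2 : u ≤ 2) (hH0 : 0 ≤ H)
    (hd : d*(E+1) = (E-1)*t)
    (hlb1 : d^2 ≤ H*(2*u)) (hlb2 : d^2 ≤ H*(2*(2-u))) :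
    (1/64)*ε^2*t^2 ≤ H := by
  have hd2 : d^2*(E+1)^2 = (E-1)^2*t^2 := sq_eq_of_mul d t E hd
  have h1 : ε^2*t^2 ≤ (E-1)^2*t^2 := by
    nlinarith [mul_nonneg (mul_nonneg (by linarith : (0:ℝ) ≤ E-1-ε) (by linarith : (0:ℝ) ≤ E-1+ε)) (sq_nonneg t)]
  have h2 : d^2 ≤ 2*H := by
    rcases le_total u 1 with h | h
    · nlinarith
    · nlinarith
  have h5 : d^2*(E+1)^2 ≤ 2*H*(E+1)^2 :=
    mul_le_mul_of_nonneg_right h2 (sq_nonneg (E+1))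
  have h6 : 2*H*(E+1)^2 ≤ 28*H := by
    nlinarith [mul_nonneg hH0 (show (0:ℝ) ≤ 14 - (E+1)^2 by nlinarith)]
  linarith
lemma case1_upper (ε E t H d : ℝ) (hε : 0 < ε) (hεe : ε ≤ 1)
    (hE1 : 1 < E) (hEε : E - 1 ≤ ε*E) (hEu : E ≤ 2.7182818286)
    (hH0 : 0 ≤ H)
    (hd : d*(E+1) = (E-1)*t)
    (hub : H*(2*(1/(E+1))) ≤ 2*d^2) :
    H ≤ 4*ε^2*t^2 := by
  have hE1' : (0:ℝ) < E + 1 := by linarith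
  have hd2 : d^2*(E+1)^2 = (E-1)^2*t^2 := sq_eq_of_mul d t E hd
  have h1 : H ≤ d^2*(E+1) := by
    have h := mul_le_mul_of_nonneg_right hub (le_of_lt hE1')
    have e : H*(2*(1/(E+1)))*(E+1) = 2*H := by field_simp
    nlinarith [h, e]
  have h2 : (E-1)^2*t^2 ≤ ε^2*E^2*t^2 := by
    nlinarith [mul_nonneg (mul_nonneg (by nlinarith : (0:ℝ) ≤ ε*E - (E-1)) (by nlinarith : (0:ℝ) ≤ ε*E + (E-1))) (sq_nonneg t)]
  have h3 : H*(E+1) ≤ ε^2*E^2*t^2 := by nlinarith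
  have ha : (0:ℝ) ≤ ε^2*t^2 := by positivity
  have hb : E^2 ≤ 4*(E+1) := by nlinarith
  have h4 : ε^2*E^2*t^2 ≤ 4*ε^2*t^2*(E+1) := by
    nlinarith [mul_le_mul_of_nonneg_left hb ha]
  have h5 : H*(E+1) ≤ (4*ε^2*t^2)*(E+1) := by linarith
  exact le_of_mul_le_mul_right (by linarith) hE1'
lemma case2_upper (E t H d : ℝ) (hE2 : 2 ≤ E) (hH0 : 0 ≤ H)
    (hd : d*(E+1) = (E-1)*t)
    (hub : H*(2*(1/(E+1))) ≤ 2*d^2) :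
    H ≤ E*t^2 := by
  have hE1' : (0:ℝ) < E + 1 := by linarith
  have hd2 : d^2*(E+1)^2 = (E-1)^2*t^2 := sq_eq_of_mul d t E hd
  have h1 : H ≤ d^2*(E+1) := by
    have h := mul_le_mul_of_nonneg_right hub (le_of_lt hE1')
    have e : H*(2*(1/(E+1)))*(E+1) = 2*H := by field_simp
    nlinarith [h, e]
  have h2 : (E-1)^2*t^2 ≤ E*(E+1)*t^2 := by
    nlinarith [mul_nonneg (by nlinarith : (0:ℝ) ≤ E*(E+1) - (E-1)^2) (sq_nonneg t)]
  have h3 : H*(E+1) ≤ E*(E+1)*t^2 := by nlinarith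
  exact le_of_mul_le_mul_right (by nlinarith) hE1'
lemma case2_lower (E t s H G : ℝ) (hE2 : 2 ≤ E)
    (hs0 : 0 ≤ s) (hs1 : s ≤ 1) (hH0 : 0 ≤ H) (hG0 : 0 ≤ G)
    (hH : (E-1)^2*t^2 ≤ 2*H*(E+1)*(E*s+(2-s)))
    (hGs : G*s ≤ 2*t^2) :
    min (E*t^2) G ≤ 64*H := by
  have hE10 : (0:ℝ) ≤ E + 1 := by linarith
  have hpoly : (0:ℝ) ≤ 8*(E-1)^2 - (E+1)*E := by nlinarith [sq_nonneg (E-2)]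
  rcases le_or_gt (E*s) 2 with h | h
  · refine le_trans (min_le_left _ _) ?_
    have h1 : (E-1)^2*t^2 ≤ 8*H*(E+1) := by
      nlinarith [mul_nonneg (mul_nonneg hH0 hE10) (by linarith : (0:ℝ) ≤ 4 - (E*s+(2-s)))]
    have h2 : E*(E+1)*t^2 ≤ 8*(E-1)^2*t^2 := by
      nlinarith [mul_nonneg hpoly (sq_nonneg t)]
    have h3 : E*t^2*(E+1) ≤ 64*H*(E+1) := by nlinarith
    exact le_of_mul_le_mul_right (by nlinarith) (by linarith : (0:ℝ) < E+1)
  · refine le_trans (min_le_right _ _) ?_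
    have hspos : 0 < s := by nlinarith
    have h1 : (E-1)^2*t^2 ≤ 4*H*(E+1)*(E*s) := by
      nlinarith [mul_nonneg (mul_nonneg hH0 hE10) (by linarith : (0:ℝ) ≤ 2*(E*s) - (E*s+(2-s)))]
    have h2 : G*s*(E-1)^2 ≤ 8*H*(E+1)*(E*s) := by
      nlinarith [mul_le_mul_of_nonneg_right hGs (sq_nonneg (E-1))]
    have h3 : 8*H*(E+1)*(E*s) ≤ 64*H*(E-1)^2*s := by
      nlinarith [mul_nonneg (mul_nonneg hH0 hs0) hpoly]
    have h4 : G*(s*(E-1)^2) ≤ (64*H)*(s*(E-1)^2) := by nlinarith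
    exact le_of_mul_le_mul_right h4
      (mul_pos hspos (pow_pos (by linarith : (0:ℝ) < E-1) 2))

lemma xsb (E x w : ℝ) (hE1 : 1 < E) (hw0 : 0 ≤ w) (hw1 : w ≤ 1)
    (hx : x*(E+1) = E*w + (1-w)) :
    0 ≤ x ∧ 1/(E+1) ≤ x ∧ x ≤ E/(E+1) ∧ x ≤ 1 := by
  have hE1' : (0:ℝ) < E + 1 := by linarith
  have h0 : 0 ≤ x := by nlinarith
  have h1 : 1/(E+1) ≤ x := by rw [div_le_iff₀ hE1']; nlinarith
  have h2 : x ≤ E/(E+1) := by rw [le_div_iff₀ hE1']; nlinarith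
  exact ⟨h0, h1, h2, by nlinarith⟩

lemma Hfacts (E xs ys : ℝ) (hE1 : 1 < E)
    (hxs0 : 0 ≤ xs) (hys0 : 0 ≤ ys) (hxs1 : xs ≤ 1) (hys1 : ys ≤ 1)
    (hxsl : 1/(E+1) ≤ xs) (hysl : 1/(E+1) ≤ ys)
    (hxu : xs ≤ E/(E+1)) (hyu : ys ≤ E/(E+1)) :
    (xs-ys)^2 ≤ ((sqrt xs - sqrt ys)^2+(sqrt (1-xs) - sqrt (1-ys))^2)*(2*(xs+ys)) ∧
    (xs-ys)^2 ≤ ((sqrt xs - sqrt ys)^2+(sqrt (1-xs) - sqrt (1-ys))^2)*(2*(2-(xs+ys))) ∧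
    ((sqrt xs - sqrt ys)^2+(sqrt (1-xs) - sqrt (1-ys))^2)*(2*(1/(E+1))) ≤ 2*(xs-ys)^2 := by
  have hE1' : (0:ℝ) < E + 1 := by linarith
  have ht1 : 0 ≤ (sqrt xs - sqrt ys)^2 := sq_nonneg _
  have ht2 : 0 ≤ (sqrt (1-xs) - sqrt (1-ys))^2 := sq_nonneg _
  have l1 := lower1 xs ys hxs0 hys0
  have l2 := lower1 (1-xs) (1-ys) (by linarith) (by linarith)
  have u1 := upper1 xs ys hxs0 hys0
  have u2 := upper1 (1-xs) (1-ys) (by linarith) (by linarith)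
  have hEd : E/(E+1) = 1 - 1/(E+1) := by field_simp; ring
  rw [hEd] at hxu hyu
  refine ⟨?_, ?_, ?_⟩
  · nlinarith [mul_nonneg ht2 (by linarith : (0:ℝ) ≤ 2*(xs+ys))]
  · nlinarith [mul_nonneg ht1 (by linarith : (0:ℝ) ≤ 2*(2-(xs+ys)))]
  · have b1 : (sqrt xs - sqrt ys)^2*(2*(1/(E+1))) ≤ (xs-ys)^2 := by
      nlinarith [mul_nonneg ht1 (by linarith : (0:ℝ) ≤ xs + ys - 2*(1/(E+1)))]
    have b2 : (sqrt (1-xs) - sqrt (1-ys))^2*(2*(1/(E+1))) ≤ (xs-ys)^2 := by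
      nlinarith [mul_nonneg ht2 (by linarith : (0:ℝ) ≤ (1-xs) + (1-ys) - 2*(1/(E+1)))]
    nlinarith [b1, b2]

lemma Gs_help (t2 G1 G2 s1 s2 : ℝ) (hG2 : 0 ≤ G2)
    (hg1 : G1*s1 ≤ t2) (hg2 : G2*s2 ≤ t2) (hc : s1 ≤ s2) :
    (G1+G2)*s1 ≤ 2*t2 := by nlinarith

lemma expeps (ε E : ℝ) (hEpos : 0 < E) (h : -ε + 1 ≤ Real.exp (-ε))
    (he : Real.exp (-ε) * E = 1) : E - 1 ≤ ε*E := by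
  nlinarith [mul_le_mul_of_nonneg_right h (le_of_lt hEpos)]

end SDPIAux

open SDPIAux Real in
set_option maxHeartbeats 2000000 in
/-- Strong data processing inequality for randomized response on binary distributions
(Proposition: sample complexity of binary distributions / SDPI for Hellinger divergence). -/
theorem stmt0 :
    ∃ c C : ℝ, 0 < c ∧ c ≤ C ∧
      ∀ ε : ℝ, 0 < ε → ∀ p q : Fin 2 → ℝ, IsDist p → IsDist q →
        ∀ V : ℝ,
          V = sSup {x : ℝ | ∃ T : Matrix (Fin 2) (Fin 2) ℝ,
              IsLDP ε T ∧ x = hellingerSq (T.mulVec p) (T.mulVec q)} →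
          (ε ≤ 1 →
            c * ε ^ 2 * tvDist p q ^ 2 ≤ V ∧ V ≤ C * ε ^ 2 * tvDist p q ^ 2) ∧
          (1 < ε →
            c * min (Real.exp ε * tvDist p q ^ 2) (hellingerSq p q) ≤ V ∧
            V ≤ C * min (Real.exp ε * tvDist p q ^ 2) (hellingerSq p q)) ∧
          V = hellingerSq ((RRChannel ε 2).mulVec p) ((RRChannel ε 2).mulVec q) := by
  refine ⟨1/64, 4, by norm_num, by norm_num, ?_⟩
  intro ε hε p q hpd hqd V hV
  obtain ⟨hpnn, hpsum⟩ := hpd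
  obtain ⟨hqnn, hqsum⟩ := hqd
  have hp01 : p 0 + p 1 = 1 := by rw [Fin.sum_univ_two] at hpsum; exact hpsum
  have hq01 : q 0 + q 1 = 1 := by rw [Fin.sum_univ_two] at hqsum; exact hqsum
  have hp0 := hpnn 0; have hp1 := hpnn 1; have hq0 := hqnn 0; have hq1 := hqnn 1
  set E : ℝ := Real.exp ε with hEdef
  have hEpos : 0 < E := Real.exp_pos ε
  have hE1 : 1 < E := by
    have := Real.exp_lt_exp.mpr hε
    rwa [Real.exp_zero] at this
  have hE1' : (0:ℝ) < E + 1 := by linarith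
  -- entries of RR channel
  have hD : ((2:ℕ):ℝ) - 1 + Real.exp ε = E + 1 := by push_cast; rw [← hEdef]; ring
  have hRR : ∀ j i : Fin 2, RRChannel ε 2 j i = if j = i then E/(E+1) else 1/(E+1) := by
    intro j i
    show (if j = i then Real.exp ε / (((2:ℕ):ℝ) - 1 + Real.exp ε)
         else 1 / (((2:ℕ):ℝ) - 1 + Real.exp ε)) = _
    rw [hD, hEdef]
  -- helpers for sums over Fin 2
  have hmv : ∀ (M : Matrix (Fin 2) (Fin 2) ℝ) (v : Fin 2 → ℝ) (i : Fin 2),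
      M.mulVec v i = M i 0 * v 0 + M i 1 * v 1 := by
    intro M v i; simp [Matrix.mulVec, dotProduct, Fin.sum_univ_two]
  have hhel : ∀ (f g : Fin 2 → ℝ), hellingerSq f g
      = (sqrt (f 0) - sqrt (g 0))^2 + (sqrt (f 1) - sqrt (g 1))^2 := by
    intro f g; rw [hellingerSq, Fin.sum_univ_two]
  -- the RR outputs
  set xs : ℝ := E/(E+1)*p 0 + 1/(E+1)*p 1 with hxsdef
  set ys : ℝ := E/(E+1)*q 0 + 1/(E+1)*q 1 with hysdef
  set H : ℝ := (sqrt xs - sqrt ys)^2 + (sqrt (1-xs) - sqrt (1-ys))^2 with hHdef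
  have hrow2p : 1/(E+1)*p 0 + E/(E+1)*p 1 = 1 - xs := by
    rw [hxsdef]; field_simp; linear_combination (E+1)*hp01
  have hrow2q : 1/(E+1)*q 0 + E/(E+1)*q 1 = 1 - ys := by
    rw [hysdef]; field_simp; linear_combination (E+1)*hq01
  -- RR value equals H
  have e00 : (if (0:Fin 2) = 0 then E/(E+1) else 1/(E+1)) = E/(E+1) := if_pos rfl
  have e01 : (if (0:Fin 2) = 1 then E/(E+1) else 1/(E+1)) = 1/(E+1) := if_neg (by decide)
  have e10 : (if (1:Fin 2) = 0 then E/(E+1) else 1/(E+1)) = 1/(E+1) := if_neg (by decide)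
  have e11 : (if (1:Fin 2) = 1 then E/(E+1) else 1/(E+1)) = E/(E+1) := if_pos rfl
  have hVR : hellingerSq ((RRChannel ε 2).mulVec p) ((RRChannel ε 2).mulVec q) = H := by
    rw [hhel, hmv, hmv, hmv, hmv, hRR 0 0, hRR 0 1, hRR 1 0, hRR 1 1,
      e00, e01, e10, e11, hrow2p, hrow2q]
  -- RR is LDP
  have hRRldp : IsLDP ε (RRChannel ε 2) := by
    refine ⟨⟨?_, ?_⟩, ?_⟩
    · intro r c; rw [hRR]; split_ifs
      · exact div_nonneg (le_of_lt hEpos) (le_of_lt hE1')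
      · exact div_nonneg zero_le_one (le_of_lt hE1')
    · intro c
      rw [Fin.sum_univ_two, hRR, hRR]
      fin_cases c <;> norm_num <;> field_simp <;> ring
    · intro r c c'
      rw [hRR, hRR, ← hEdef]
      have key1 : E/(E+1) ≤ E * (E/(E+1)) := by
        rw [← sub_nonneg]
        have : E * (E/(E+1)) - E/(E+1) = (E-1)*(E/(E+1)) := by ring
        rw [this]
        exact mul_nonneg (by linarith) (div_nonneg (le_of_lt hEpos) (le_of_lt hE1'))
      have key2 : E/(E+1) ≤ E * (1/(E+1)) := by rw [mul_one_div]
      have key3 : 1/(E+1) ≤ E * (E/(E+1)) := by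
        rw [← sub_nonneg, show E * (E/(E+1)) - 1/(E+1) = (E*E-1)/(E+1) by ring]
        exact div_nonneg (by nlinarith) (le_of_lt hE1')
      have key4 : 1/(E+1) ≤ E * (1/(E+1)) := by
        rw [← sub_nonneg, show E * (1/(E+1)) - 1/(E+1) = (E-1)/(E+1) by ring]
        exact div_nonneg (by linarith) (le_of_lt hE1')
      split_ifs <;> first
        | exact key1 | exact key2 | exact key3 | exact key4
  -- upper bound over all LDP channels
  have hubS : ∀ z ∈ {x : ℝ | ∃ T : Matrix (Fin 2) (Fin 2) ℝ,
      IsLDP ε T ∧ x = hellingerSq (T.mulVec p) (T.mulVec q)}, z ≤ H := by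
    rintro z ⟨T, ⟨⟨hTnn, hTcol⟩, hTldp⟩, rfl⟩
    have hT10 : T 1 0 = 1 - T 0 0 := by
      have := hTcol 0; rw [Fin.sum_univ_two] at this; linarith
    have hT11 : T 1 1 = 1 - T 0 1 := by
      have := hTcol 1; rw [Fin.sum_univ_two] at this; linarith
    set a : ℝ := T 0 0 with hadef
    set b : ℝ := T 0 1 with hbdef
    have ha0 : 0 ≤ a := hTnn 0 0
    have hb0 : 0 ≤ b := hTnn 0 1
    have ha1 : a ≤ 1 := by have := hTnn 1 0; rw [hT10] at this; linarith
    have hb1 : b ≤ 1 := by have := hTnn 1 1; rw [hT11] at this; linarith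
    have hab : a ≤ E*b := hTldp 0 0 1
    have hba : b ≤ E*a := hTldp 0 1 0
    have h1a : 1-a ≤ E*(1-b) := by
      have := hTldp 1 0 1; rwa [hT10, hT11] at this
    have h1b : 1-b ≤ E*(1-a) := by
      have := hTldp 1 1 0; rwa [hT10, hT11] at this
    rw [hhel, hmv, hmv, hmv, hmv, hT10, hT11]
    have ep : (1-a)*p 0+(1-b)*p 1 = 1-(a*p 0+b*p 1) := by linear_combination hp01
    have eq' : (1-a)*q 0+(1-b)*q 1 = 1-(a*q 0+b*q 1) := by linear_combination hq01
    rcases le_total b a with hba2 | hba2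
    · rw [ep, eq']
      exact channel_le E a b (p 0) (p 1) (q 0) (q 1) hE1 hb0 hba2 ha1 hab h1b
        hp0 hp1 hp01 hq0 hq1 hq01
    · have key := channel_le E (1-a) (1-b) (p 0) (p 1) (q 0) (q 1) hE1
        (by linarith) (by linarith) (by linarith) (by linarith) (by linarith)
        hp0 hp1 hp01 hq0 hq1 hq01
      have ep2 : 1-((1-a)*p 0+(1-b)*p 1) = a*p 0+b*p 1 := by linear_combination (-1 : ℝ)*hp01
      have eq2 : 1-((1-a)*q 0+(1-b)*q 1) = a*q 0+b*q 1 := by linear_combination (-1 : ℝ)*hq01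
      rw [ep2, eq2] at key
      linarith [key]
  -- the supremum equals H
  have hmemS : H ∈ {x : ℝ | ∃ T : Matrix (Fin 2) (Fin 2) ℝ,
      IsLDP ε T ∧ x = hellingerSq (T.mulVec p) (T.mulVec q)} :=
    ⟨RRChannel ε 2, hRRldp, hVR.symm⟩
  have hVH : V = H := by
    rw [hV]
    exact le_antisymm (csSup_le ⟨H, hmemS⟩ hubS) (le_csSup ⟨H, hubS⟩ hmemS)
  -- basic quantities
  set t : ℝ := p 0 - q 0 with htdef
  have htv2 : tvDist p q ^ 2 = t^2 := by
    rw [tvDist, Fin.sum_univ_two]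
    have e : p 1 - q 1 = -(p 0 - q 0) := by linarith
    rw [e, abs_neg, show (1/2 : ℝ)*(|p 0 - q 0| + |p 0 - q 0|) = |p 0 - q 0| by ring,
      sq_abs]
  have hhelpq : hellingerSq p q = (sqrt (p 0) - sqrt (q 0))^2 + (sqrt (p 1) - sqrt (q 1))^2 :=
    hhel p q
  set G : ℝ := (sqrt (p 0) - sqrt (q 0))^2 + (sqrt (p 1) - sqrt (q 1))^2 with hGdef
  -- bounds on xs, ys
  have hxsE : xs*(E+1) = E*p 0 + p 1 := by rw [hxsdef]; field_simp
  have hysE : ys*(E+1) = E*q 0 + q 1 := by rw [hysdef]; field_simp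
  have hxsE' : xs*(E+1) = E*p 0 + (1-p 0) := by linarith [hxsE]
  have hysE' : ys*(E+1) = E*q 0 + (1-q 0) := by linarith [hysE]
  obtain ⟨hxs0, hxsl, hxu, hxs1⟩ := xsb E xs (p 0) hE1 hp0 (by linarith) hxsE'
  obtain ⟨hys0, hysl, hyu, hys1⟩ := xsb E ys (q 0) hE1 hq0 (by linarith) hysE'
  set d : ℝ := xs - ys with hddef
  have hd : d*(E+1) = (E-1)*t := by
    rw [hddef, htdef]; linear_combination hxsE - hysE + hp01 - hq01
  have hd2 : d^2*(E+1)^2 = (E-1)^2*t^2 := sq_eq_of_mul d t E hd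
  have hH0 : 0 ≤ H := by rw [hHdef]; positivity
  obtain ⟨hlb1, hlb2, hub⟩ := Hfacts E xs ys hE1 hxs0 hys0 hxs1 hys1 hxsl hysl hxu hyu
  rw [← hHdef, ← hddef] at hlb1 hlb2 hub
  -- DPI : H ≤ G
  have hdpi : H ≤ G := by
    have hAB : E/(E+1) + 1/(E+1) = 1 := by field_simp
    have key := dpi (E/(E+1)) (1/(E+1)) (p 0) (p 1) (q 0) (q 1)
      (div_nonneg (le_of_lt hEpos) (le_of_lt hE1'))
      (div_nonneg zero_le_one (le_of_lt hE1')) hAB hp0 hp1 hq0 hq1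
    rw [hrow2p, hrow2q] at key
    rw [hHdef, hGdef]
    exact key
  -- sum identity
  have huE : (xs+ys)*(E+1) = E*(p 0+q 0) + (p 1+q 1) := by
    linear_combination hxsE + hysE
  refine ⟨?_, ?_, hVH.trans hVR.symm⟩
  · -- ε ≤ 1
    intro hεe
    have hEl : ε + 1 ≤ E := by rw [hEdef]; exact Real.add_one_le_exp ε
    have hEu : E ≤ 2.7182818286 := by
      rw [hEdef]
      calc Real.exp ε ≤ Real.exp 1 := Real.exp_le_exp.mpr hεe
        _ ≤ 2.7182818286 := le_of_lt Real.exp_one_lt_d9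
    have hEε : E - 1 ≤ ε*E := by
      refine expeps ε E hEpos (Real.add_one_le_exp (-ε)) ?_
      rw [hEdef, ← Real.exp_add]; norm_num
    constructor
    · rw [hVH, htv2]
      have := case1_lower ε E t H d (xs+ys) hε hεe hEl hEu (by linarith) (by linarith)
        hH0 hd hlb1 hlb2
      linarith
    · rw [hVH, htv2]
      have := case1_upper ε E t H d hε hεe hE1 hEε hEu hH0 hd hub
      linarith
  · -- ε > 1
    intro hε1
    have hE2 : 2 ≤ E := by
      rw [hEdef]
      calc (2:ℝ) ≤ 2.7182818283 := by norm_num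
        _ ≤ Real.exp 1 := le_of_lt Real.exp_one_gt_d9
        _ ≤ Real.exp ε := Real.exp_le_exp.mpr (le_of_lt hε1)
    have hG0 : 0 ≤ G := by rw [hGdef]; positivity
    constructor
    · rw [hVH, htv2, hhelpq]
      have g1 : (sqrt (p 0) - sqrt (q 0))^2*(p 0+q 0) ≤ t^2 := by
        have := upper1 (p 0) (q 0) hp0 hq0; rw [htdef]; linarith
      have g2 : (sqrt (p 1) - sqrt (q 1))^2*(p 1+q 1) ≤ t^2 := by
        have := upper1 (p 1) (q 1) hp1 hq1
        have e : (p 1 - q 1)^2 = t^2 := by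
          rw [htdef]; linear_combination (p 1 - q 1 - p 0 + q 0) * (hp01 - hq01)
        linarith [e ▸ this]
      rcases le_total (p 0 + q 0) (p 1 + q 1) with hc | hc
      · have hH2 : (E-1)^2*t^2 ≤ 2*H*(E+1)*(E*(p 0+q 0)+(2-(p 0+q 0))) := by
          calc (E-1)^2*t^2 = d^2*(E+1)^2 := hd2.symm
            _ ≤ (H*(2*(xs+ys)))*(E+1)^2 := mul_le_mul_of_nonneg_right hlb1 (sq_nonneg _)
            _ = 2*H*(E+1)*((xs+ys)*(E+1)) := by ring
            _ = 2*H*(E+1)*(E*(p 0+q 0)+(2-(p 0+q 0))) := by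
                rw [huE]; congr 1; linarith
        have hGs : G*(p 0+q 0) ≤ 2*t^2 := by
          rw [hGdef]
          exact Gs_help (t^2) _ _ (p 0+q 0) (p 1+q 1) (sq_nonneg _) g1 g2 hc
        have := case2_lower E t (p 0+q 0) H G hE2 (by linarith) (by linarith) hH0 hG0 hH2 hGs
        linarith
      · have h2uE : (2-(xs+ys))*(E+1) = E*(p 1+q 1) + (p 0+q 0) := by
          linear_combination -huE - (E+1)*hp01 - (E+1)*hq01
        have hH2 : (E-1)^2*t^2 ≤ 2*H*(E+1)*(E*(p 1+q 1)+(2-(p 1+q 1))) := by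
          calc (E-1)^2*t^2 = d^2*(E+1)^2 := hd2.symm
            _ ≤ (H*(2*(2-(xs+ys))))*(E+1)^2 := mul_le_mul_of_nonneg_right hlb2 (sq_nonneg _)
            _ = 2*H*(E+1)*((2-(xs+ys))*(E+1)) := by ring
            _ = 2*H*(E+1)*(E*(p 1+q 1)+(2-(p 1+q 1))) := by
                rw [h2uE]; congr 1; linarith
        have hGs : G*(p 1+q 1) ≤ 2*t^2 := by
          rw [hGdef, show (sqrt (p 0) - sqrt (q 0))^2 + (sqrt (p 1) - sqrt (q 1))^2
            = (sqrt (p 1) - sqrt (q 1))^2 + (sqrt (p 0) - sqrt (q 0))^2 from by ring]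
          exact Gs_help (t^2) _ _ (p 1+q 1) (p 0+q 0) (sq_nonneg _) g2 g1 hc
        have := case2_lower E t (p 1+q 1) H G hE2 (by linarith) (by linarith) hH0 hG0 hH2 hGs
        linarith
    · rw [hVH, htv2, hhelpq]
      have h1 : H ≤ E*t^2 := case2_upper E t H d hE2 hH0 hd hub
      have hmin : H ≤ min (E*t^2) G := le_min h1 hdpi
      have hmin0 : 0 ≤ min (E*t^2) G := le_min (by positivity) hG0
      linarith [hmin, hmin0, min_le_left (E*t^2) G, min_le_right (E*t^2) G]
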